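/- Let U be an ℓ×ℓ complex unitary matrix with spectral decomposition U = Σ_{r=1}^m λ_r F_r, and let ε > 0. Then for every integer K with K ≥ (2ℓ/ε) Σ_{r ≠ s} 1/|λ_r − λ_s|, and every unit vector x ∈ ℂ^ℓ, one has Σ_{j=1}^ℓ | (1/K) Σ_{k=0}^{K-1} x* (U^k)* D_j U^k x − Σ_{r=1}^m x* F_r D_j F_r x | ≤ ε. -/

import Mathlib

open Matrix Filter Finset

lemma quadD {n : ℕ} (M : Matrix (Fin n) (Fin n) ℂ) (j : Fin n) (x : Fin n → ℂ) :
    star x ⬝ᵥ ((Mᴴ * Matrix.single j j 1 * M) *ᵥ x)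
      = star ((M *ᵥ x) j) * ((M *ᵥ x) j) := by
  rw [Matrix.mul_assoc, ← Matrix.mulVec_mulVec, ← Matrix.mulVec_mulVec]
  rw [Matrix.dotProduct_mulVec, ← Matrix.star_mulVec]
  simp [dotProduct, mulVec, single, ite_and, Finset.mul_sum, Finset.sum_mul,
    Pi.star_apply, mul_comm]

lemma unit_star_mul {z : ℂ} (h : ‖z‖ = 1) : star z * z = 1 := by
  rw [Complex.star_def, mul_comm, Complex.mul_conj]
  norm_cast
  rw [← Complex.sq_norm, h]; norm_num

lemma geo_bound (μ : ℂ) (hμ : ‖μ‖ = 1) (hne : μ ≠ 1) (K : ℕ) :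
    ‖ ∑ k ∈ Finset.range K, μ ^ k‖ ≤ 2 / ‖ μ - 1‖ := by
  rw [geom_sum_eq hne, norm_div]
  have hd : 0 < ‖ μ - 1‖ := by simpa [sub_eq_zero] using hne
  gcongr
  calc ‖ μ ^ K - 1‖ ≤ ‖ μ ^ K‖ + ‖(1:ℂ)‖ := by
        exact norm_sub_le (μ ^ K) (1 : ℂ)
    _ = 2 := by rw [norm_pow, hμ]; norm_num

lemma pow_spec {m n : ℕ} (lam : Fin m → ℂ) (F : Fin m → Matrix (Fin n) (Fin n) ℂ)
    (hidem : ∀ r, F r * F r = F r)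
    (horth : ∀ r s, r ≠ s → F r * F s = 0)
    (hsum : ∑ r, F r = 1) (k : ℕ) :
    (∑ r, lam r • F r) ^ k = ∑ r, lam r ^ k • F r := by
  induction k with
  | zero => simpa using hsum.symm
  | succ k ih =>
    rw [pow_succ, ih, Finset.sum_mul]
    refine Finset.sum_congr rfl fun r _ => ?_
    rw [Finset.mul_sum, Finset.sum_eq_single r]
    · rw [smul_mul_smul_comm, hidem r, pow_succ]
    · intro s _ hs
      rw [smul_mul_smul_comm, horth r s (Ne.symm hs), smul_zero]
    · simp

lemma sum_mulVec' {α : Type*} [Fintype α] {n : ℕ} (F : α → Matrix (Fin n) (Fin n) ℂ) (x : Fin n → ℂ) :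
    (∑ r, F r) *ᵥ x = ∑ r, F r *ᵥ x := by
  ext i
  simp only [mulVec, dotProduct, Finset.sum_apply, Matrix.sum_apply, Finset.sum_mul]
  exact Finset.sum_comm

lemma dotProduct_sum' {α : Type*} [Fintype α] {n : ℕ} (v : Fin n → ℂ) (w : α → Fin n → ℂ) :
    v ⬝ᵥ (∑ r, w r) = ∑ r, v ⬝ᵥ w r := by
  simp only [dotProduct, Finset.sum_apply, Finset.mul_sum]
  exact Finset.sum_comm

theorem mixing_time_bound (ℓ m : ℕ) (hℓ : 0 < ℓ)
    (U : Matrix (Fin ℓ) (Fin ℓ) ℂ)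
    (hU : U ∈ Matrix.unitaryGroup (Fin ℓ) ℂ)
    (lam : Fin m → ℂ) (F : Fin m → Matrix (Fin ℓ) (Fin ℓ) ℂ)
    (hdist : Function.Injective lam)
    (hmod : ∀ r, ‖lam r‖ = 1)
    (hherm : ∀ r, (F r)ᴴ = F r)
    (hidem : ∀ r, F r * F r = F r)
    (horth : ∀ r s, r ≠ s → F r * F s = 0)
    (hsum : ∑ r, F r = 1)
    (hspec : U = ∑ r, lam r • F r)
    (ε : ℝ) (hε : 0 < ε)
    (K : ℕ) (hKpos : 0 < K)
    (hK : (K : ℝ) ≥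
      (2 * ℓ / ε) *
        ∑ r, ∑ s, if r ≠ s then 1 / ‖lam r - lam s‖ else 0)
    (x : Fin ℓ → ℂ) (hx : star x ⬝ᵥ x = 1) :
    ∑ j : Fin ℓ,
      ‖
        ((K : ℂ)⁻¹ *
            ∑ k ∈ Finset.range K,
              star x ⬝ᵥ (((U ^ k)ᴴ * Matrix.single j j 1 * U ^ k) *ᵥ x) -
          ∑ r, star x ⬝ᵥ ((F r * Matrix.single j j 1 * F r) *ᵥ x))‖ ≤ ε := by
  have hKR : (0:ℝ) < K := by exact_mod_cast hKpos
  have hKne : (K : ℂ) ≠ 0 := Nat.cast_ne_zero.mpr hKpos.ne'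
  set y : Fin m → Fin ℓ → ℂ := fun r => F r *ᵥ x with hy
  set q : Fin m → ℝ := fun r => ∑ i, Complex.normSq (y r i) with hqdef
  -- each component of y r has modulus ≤ 1
  have hynorm : ∀ r j, ‖ y r j‖ ≤ 1 := by
    have hq : ∀ r, star (y r) ⬝ᵥ (y r) = ((q r : ℝ) : ℂ) := by
      intro r
      rw [hqdef]
      push_cast
      simp only [dotProduct, Pi.star_apply, Complex.star_def]
      exact Finset.sum_congr rfl fun i _ => by rw [mul_comm, Complex.mul_conj]
    have hq2 : ∀ r, star (y r) ⬝ᵥ (y r) = star x ⬝ᵥ (F r *ᵥ x) := by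
      intro r
      rw [hy]
      simp only
      rw [Matrix.star_mulVec, Matrix.dotProduct_mulVec (star x ᵥ* (F r)ᴴ),
        Matrix.vecMul_vecMul, ← Matrix.dotProduct_mulVec, hherm r, hidem r]
    have hsum1 : (∑ r, ((q r : ℝ) : ℂ)) = 1 := by
      rw [← funext hq, funext hq2, ← dotProduct_sum' _ _, ← sum_mulVec', hsum,
        Matrix.one_mulVec, hx]
    have hsumR : (∑ r, q r) = 1 := by exact_mod_cast hsum1
    have hqnn : ∀ r, 0 ≤ q r := fun r =>
      Finset.sum_nonneg fun i _ => Complex.normSq_nonneg _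
    intro r j
    have h1 : Complex.normSq (y r j) ≤ q r :=
      Finset.single_le_sum (f := fun i => Complex.normSq (y r i))
        (fun i _ => Complex.normSq_nonneg _) (Finset.mem_univ j)
    have h2 : q r ≤ 1 := by
      rw [← hsumR]
      exact Finset.single_le_sum (fun s _ => hqnn s) (Finset.mem_univ r)
    have h3 : (‖ y r j‖)^2 ≤ 1 := by
      rw [Complex.sq_norm]; linarith
    nlinarith [norm_nonneg (y r j)]
  -- averaged coefficients
  set c : Fin m → Fin m → ℂ :=
    fun r s => (K : ℂ)⁻¹ * ∑ k ∈ Finset.range K, (star (lam r) * lam s) ^ k with hc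
  have hcrr : ∀ r, c r r = 1 := by
    intro r
    rw [hc]
    simp only [unit_star_mul (hmod r), one_pow, Finset.sum_const, Finset.card_range,
      nsmul_eq_mul, mul_one]
    exact inv_mul_cancel₀ hKne
  -- quadratic-form computations
  have hterm : ∀ (k : ℕ) (j : Fin ℓ),
      star x ⬝ᵥ (((U ^ k)ᴴ * Matrix.single j j 1 * U ^ k) *ᵥ x)
        = ∑ r, ∑ s, (star (lam r) * lam s) ^ k * (star (y r j) * y s j) := by
    intro k j
    rw [quadD]
    have hUkj : ((U ^ k) *ᵥ x) j = ∑ r, lam r ^ k * y r j := by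
      rw [hspec, pow_spec lam F hidem horth hsum, sum_mulVec']
      simp [Matrix.smul_mulVec, Finset.sum_apply, hy]
    rw [hUkj, star_sum, Finset.sum_mul_sum]
    refine Finset.sum_congr rfl fun r _ => Finset.sum_congr rfl fun s _ => ?_
    simp only [star_mul', star_pow]
    ring
  have hterm2 : ∀ (r : Fin m) (j : Fin ℓ),
      star x ⬝ᵥ ((F r * Matrix.single j j 1 * F r) *ᵥ x)
        = star (y r j) * y r j := by
    intro r j
    conv_lhs => rw [show F r * Matrix.single j j 1 * F r
      = (F r)ᴴ * Matrix.single j j 1 * F r by rw [hherm r]]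
    rw [quadD]
  -- the key identity for each j
  have hEj : ∀ j : Fin ℓ,
      ((K : ℂ)⁻¹ *
          ∑ k ∈ Finset.range K,
            star x ⬝ᵥ (((U ^ k)ᴴ * Matrix.single j j 1 * U ^ k) *ᵥ x) -
        ∑ r, star x ⬝ᵥ ((F r * Matrix.single j j 1 * F r) *ᵥ x))
      = ∑ r, ∑ s, (if r = s then 0 else c r s * (star (y r j) * y s j)) := by
    intro j
    rw [Finset.sum_congr rfl fun k _ => hterm k j,
      Finset.sum_congr rfl fun r _ => hterm2 r j]
    have h3 : ∑ k ∈ Finset.range K, ∑ r, ∑ s, (star (lam r) * lam s) ^ k * (star (y r j) * y s j)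
        = ∑ r, ∑ s, ∑ k ∈ Finset.range K, (star (lam r) * lam s) ^ k * (star (y r j) * y s j) := by
      rw [Finset.sum_comm]
      exact Finset.sum_congr rfl fun r _ => Finset.sum_comm
    rw [h3, Finset.mul_sum]
    have h5 : ∀ r : Fin m, (K : ℂ)⁻¹ * ∑ s, ∑ k ∈ Finset.range K,
        (star (lam r) * lam s) ^ k * (star (y r j) * y s j)
        = ∑ s, c r s * (star (y r j) * y s j) := by
      intro r
      rw [Finset.mul_sum]
      refine Finset.sum_congr rfl fun s _ => ?_
      rw [← Finset.sum_mul, hc, mul_assoc]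
    rw [Finset.sum_congr rfl fun r _ => h5 r]
    have h4 : (∑ r, star (y r j) * y r j)
        = ∑ r, ∑ s, (if r = s then c r s * (star (y r j) * y s j) else 0) := by
      refine Finset.sum_congr rfl fun r _ => ?_
      rw [Finset.sum_ite_eq]
      simp [hcrr r]
    rw [h4, ← Finset.sum_sub_distrib]
    refine Finset.sum_congr rfl fun r _ => ?_
    rw [← Finset.sum_sub_distrib]
    refine Finset.sum_congr rfl fun s _ => ?_
    by_cases h : r = s <;> simp [h]
  -- bound on coefficients
  have hcb : ∀ r s, r ≠ s →
      ‖ c r s‖ ≤ 2 / (K * ‖ lam r - lam s‖) := by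
    intro r s hrs
    have hstarne : star (lam r) ≠ 0 := by
      intro h0
      have := hmod r
      rw [← Complex.norm_conj, ← Complex.star_def, h0] at this
      simp at this
    have hμmod : ‖ star (lam r) * lam s‖ = 1 := by
      rw [norm_mul, Complex.star_def, Complex.norm_conj, hmod, hmod, one_mul]
    have hμne : star (lam r) * lam s ≠ 1 := by
      intro h
      exact hrs (hdist (mul_left_cancel₀ hstarne
        ((unit_star_mul (hmod r)).trans h.symm)))
    have hd : ‖ star (lam r) * lam s - 1‖ = ‖ lam r - lam s‖ := by
      rw [show star (lam r) * lam s - 1 = star (lam r) * (lam s - lam r) by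
        rw [mul_sub, unit_star_mul (hmod r)], norm_mul, Complex.star_def,
        Complex.norm_conj, hmod, one_mul,
        show lam s - lam r = -(lam r - lam s) by ring, norm_neg]
    have hdpos : 0 < ‖ lam r - lam s‖ := by
      have : lam r - lam s ≠ 0 := sub_ne_zero.mpr fun h => hrs (hdist h)
      simpa using this
    rw [hc]
    simp only
    rw [norm_mul, norm_inv, Complex.norm_natCast]
    calc (K:ℝ)⁻¹ * ‖ ∑ k ∈ Finset.range K, (star (lam r) * lam s) ^ k‖
        ≤ (K:ℝ)⁻¹ * (2 / ‖ star (lam r) * lam s - 1‖) := by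
          gcongr
          exact geo_bound _ hμmod hμne K
      _ = 2 / (K * ‖ lam r - lam s‖) := by
          rw [hd]; field_simp
  -- per-j bound
  set B : ℝ := ∑ r : Fin m, ∑ s : Fin m,
    (if r = s then (0:ℝ) else 2 / (K * ‖ lam r - lam s‖)) with hB
  have hjb : ∀ j : Fin ℓ,
      ‖ ∑ r, ∑ s, (if r = s then 0 else c r s * (star (y r j) * y s j))‖ ≤ B := by
    intro j
    refine le_trans (norm_sum_le _ _) ?_
    refine Finset.sum_le_sum fun r _ => le_trans (norm_sum_le _ _) ?_
    refine Finset.sum_le_sum fun s _ => ?_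
    by_cases h : r = s
    · simp [h]
    · simp only [if_neg h]
      rw [norm_mul]
      have hg : ‖ star (y r j) * y s j‖ ≤ 1 := by
        rw [norm_mul, Complex.star_def, Complex.norm_conj]
        calc ‖ y r j‖ * ‖ y s j‖ ≤ 1 * 1 :=
              mul_le_mul (hynorm r j) (hynorm s j) (norm_nonneg _) zero_le_one
          _ = 1 := one_mul 1
      calc ‖ c r s‖ * ‖ star (y r j) * y s j‖
          ≤ ‖ c r s‖ * 1 :=
            mul_le_mul_of_nonneg_left hg (norm_nonneg _)
        _ = ‖ c r s‖ := mul_one _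
        _ ≤ 2 / (K * ‖ lam r - lam s‖) := hcb r s h
  -- assemble
  set S : ℝ := ∑ r : Fin m, ∑ s : Fin m,
    (if r ≠ s then 1 / ‖ lam r - lam s‖ else 0) with hS
  have hSnn : 0 ≤ S := by
    refine Finset.sum_nonneg fun r _ => Finset.sum_nonneg fun s _ => ?_
    by_cases h : r ≠ s
    · simp only [if_pos h]
      positivity
    · simp [h]
  have hBS : B = (2 / K) * S := by
    rw [hB, hS, Finset.mul_sum]
    refine Finset.sum_congr rfl fun r _ => ?_
    rw [Finset.mul_sum]
    refine Finset.sum_congr rfl fun s _ => ?_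
    by_cases h : r = s
    · simp [h]
    · rw [if_neg h, if_pos h, div_mul_div_comm, mul_one]
  calc ∑ j : Fin ℓ, ‖
        (K : ℂ)⁻¹ *
            ∑ k ∈ Finset.range K,
              star x ⬝ᵥ (((U ^ k)ᴴ * Matrix.single j j 1 * U ^ k) *ᵥ x) -
          ∑ r, star x ⬝ᵥ ((F r * Matrix.single j j 1 * F r) *ᵥ x)‖
      ≤ ∑ _j : Fin ℓ, B := by
        refine Finset.sum_le_sum fun j _ => ?_
        rw [hEj j]
        exact hjb j
    _ = (ℓ : ℝ) * B := by
        simp [Finset.sum_const, Finset.card_univ, nsmul_eq_mul]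
    _ ≤ ε := by
        rw [hBS, show (ℓ:ℝ) * ((2/K) * S) = (2*ℓ*S)/K by ring, div_le_iff₀ hKR]
        have h1 : ε * ((2 * ℓ / ε) * S) ≤ ε * K :=
          mul_le_mul_of_nonneg_left hK hε.le
        have h2 : ε * ((2 * ℓ / ε) * S) = 2 * ℓ * S := by field_simp
        linarith
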